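/- Let n ≥ 1 and let a = (a_S)_{S ⊆ {1,…,n}} ∈ ℝ^{2^n}. Let M ⊆ {1,…,n} be the set of all letters i such that i ∈ S for some S with a_S ≠ 0, let k = |M|, and let γ : {1,…,k} → M be the increasing bijection. Define a' = (a'_T)_{T ⊆ {1,…,k}} ∈ ℝ^{2^k} by a'_T = a_{γ(T)}, where γ(T) = {γ(j) : j ∈ T}. Then a ∈ K_{n+1} if and only if a' ∈ K_{k+1}, and a is an extreme ray of K_{n+1} if and only if a' is an extreme ray of K_{k+1}. -/

import Mathlib

/-- A graded poset: a finite poset with a least element `bot`, a greatest element `top`,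
and a rank function that is `0` at `bot` and increases by one along covering relations. -/
structure GradedPoset where
  carrier : Type
  [fintypeCarrier : Fintype carrier]
  [partialOrderCarrier : PartialOrder carrier]
  bot : carrier
  top : carrier
  bot_le : ∀ x : carrier, bot ≤ x
  le_top : ∀ x : carrier, x ≤ top
  rank : carrier → ℕ
  rank_bot : rank bot = 0
  rank_covBy : ∀ x y : carrier, x ⋖ y → rank y = rank x + 1

attribute [instance] GradedPoset.fintypeCarrier GradedPoset.partialOrderCarrier

/-- The flag number `f_S(P)`: the number of chains in `P` whose set of ranks is `S`. -/
noncomputable def flagNum (P : GradedPoset) (S : Finset ℕ) : ℕ :=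
  Set.ncard {c : Finset P.carrier |
    IsChain (· ≤ ·) (↑c : Set P.carrier) ∧ c.image P.rank = S}

/-- The cone `K_r` of all linear inequalities valid on flag `f`-vectors of graded posets
of rank `r`, modelled inside `Finset ℕ → ℝ` as the functions supported on subsets of
`{1,…,r-1}` whose associated functional is nonnegative on all graded posets of rank `r`. -/
def coneK (r : ℕ) : Set (Finset ℕ → ℝ) :=
  {a | (∀ S : Finset ℕ, ¬ S ⊆ Finset.Icc 1 (r - 1) → a S = 0) ∧
    ∀ P : GradedPoset, P.rank P.top = r →
      0 ≤ ∑ S ∈ (Finset.Icc 1 (r - 1)).powerset, a S * (flagNum P S : ℝ)}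

/-- The vector `e_∅` with coordinate `1` at `∅` and `0` elsewhere
(corresponding to the chain operator `f_∅`). -/
noncomputable def eEmpty : Finset ℕ → ℝ := fun S => if S = ∅ then 1 else 0

/-- `F` is an extreme ray of the cone `K`: `F` is a nonzero element of `K` such that
whenever `F = G + H` with `G, H ∈ K`, both `G` and `H` are nonnegative multiples of `F`. -/
def IsExtremeRay (K : Set (Finset ℕ → ℝ)) (F : Finset ℕ → ℝ) : Prop :=
  F ∈ K ∧ F ≠ 0 ∧
    ∀ G H : Finset ℕ → ℝ, G ∈ K → H ∈ K → F = G + H →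
      (∃ c : ℝ, 0 ≤ c ∧ G = c • F) ∧ ∃ c : ℝ, 0 ≤ c ∧ H = c • F

namespace GradedPoset
variable (P : GradedPoset)

lemma exists_le_covBy {x y : P.carrier} (h : x < y) : ∃ z, x ≤ z ∧ z ⋖ y := by
  classical
  obtain ⟨z, hz, hmax⟩ := (Finset.univ.filter (fun z => x ≤ z ∧ z < y)).exists_maximal
    ⟨x, by simp [h]⟩
  simp only [Finset.mem_filter, Finset.mem_univ, true_and] at hz
  refine ⟨z, hz.1, hz.2, fun w hzw hwy => ?_⟩
  exact absurd hzw (not_lt_of_ge (hmax (y := w) (by simp [le_of_lt (hz.1.trans_lt hzw), hwy]) hzw.le))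

lemma rank_lt_of_lt : ∀ {y x : P.carrier}, x < y → P.rank x < P.rank y := by
  intro y
  induction y using WellFoundedLT.induction with
  | _ y ih =>
    intro x hxy
    obtain ⟨z, hxz, hzy⟩ := P.exists_le_covBy hxy
    rcases eq_or_lt_of_le hxz with rfl | hlt
    · simp [P.rank_covBy _ _ hzy]
    · have := ih z hzy.lt hlt
      have h2 := P.rank_covBy _ _ hzy
      omega

lemma rank_le_of_le {x y : P.carrier} (h : x ≤ y) : P.rank x ≤ P.rank y := by
  rcases eq_or_lt_of_le h with rfl | h
  · exact le_rfl
  · exact (P.rank_lt_of_lt h).le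

lemma exists_rank_between : ∀ {y x : P.carrier} {r : ℕ}, x ≤ y → P.rank x ≤ r →
    r ≤ P.rank y → ∃ z, x ≤ z ∧ z ≤ y ∧ P.rank z = r := by
  intro y
  induction y using WellFoundedLT.induction with
  | _ y ih =>
    intro x r hxy hxr hry
    rcases eq_or_lt_of_le hry with rfl | hlt
    · exact ⟨y, hxy, le_rfl, rfl⟩
    · have hxy' : x < y := by
        rcases eq_or_lt_of_le hxy with rfl | h
        · omega
        · exact h
      obtain ⟨z, hxz, hzy⟩ := P.exists_le_covBy hxy'
      have h2 := P.rank_covBy _ _ hzy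
      obtain ⟨w, hw1, hw2, hw3⟩ := ih z hzy.lt hxz hxr (by omega)
      exact ⟨w, hw1, hw2.trans hzy.le, hw3⟩

end GradedPoset

/-- Carrier for the stretched poset. -/
@[ext]
structure StC (Q : GradedPoset) (g : ℕ → ℕ) where
  pt : Q.carrier
  r : ℕ
  hr1 : g (Q.rank pt) ≤ r
  hr2 : r < g (Q.rank pt + 1)

instance (Q : GradedPoset) (g : ℕ → ℕ) : PartialOrder (StC Q g) where
  le x y := x.pt < y.pt ∨ (x.pt = y.pt ∧ x.r ≤ y.r)
  lt x y := (x.pt < y.pt ∨ (x.pt = y.pt ∧ x.r ≤ y.r)) ∧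
      ¬ (y.pt < x.pt ∨ (y.pt = x.pt ∧ y.r ≤ x.r))
  lt_iff_le_not_ge _ _ := Iff.rfl
  le_refl x := Or.inr ⟨rfl, le_rfl⟩
  le_trans := by
    rintro x y z (h | ⟨h, hr⟩) (h' | ⟨h', hr'⟩)
    · exact Or.inl (h.trans h')
    · exact Or.inl (h' ▸ h)
    · exact Or.inl (h ▸ h')
    · exact Or.inr ⟨h.trans h', hr.trans hr'⟩
  le_antisymm := by
    rintro x y (h | ⟨h, hr⟩) (h' | ⟨h', hr'⟩)
    · exact absurd (h.trans h') (lt_irrefl _)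
    · exact absurd h (h' ▸ lt_irrefl _)
    · exact absurd h' (h ▸ lt_irrefl _)
    · ext
      · exact h
      · exact le_antisymm hr hr'

lemma StC.le_iff {Q : GradedPoset} {g : ℕ → ℕ} (x y : StC Q g) :
    x ≤ y ↔ (x.pt < y.pt ∨ (x.pt = y.pt ∧ x.r ≤ y.r)) := Iff.rfl

lemma StC.lt_iff {Q : GradedPoset} {g : ℕ → ℕ} (x y : StC Q g) :
    x < y ↔ (x.pt < y.pt ∨ (x.pt = y.pt ∧ x.r ≤ y.r)) ∧
      ¬ (y.pt < x.pt ∨ (y.pt = x.pt ∧ y.r ≤ x.r)) := Iff.rfl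

noncomputable def stretch (Q : GradedPoset) (g : ℕ → ℕ) (k n : ℕ)
    (hQ : Q.rank Q.top = k + 1) (hg0 : g 0 = 0) (hgm : StrictMono g)
    (hgt : g (k + 1) = n + 1) (hgt2 : g (k + 2) = n + 2) : GradedPoset where
  carrier := StC Q g
  fintypeCarrier := Fintype.ofInjective
    (fun x : StC Q g => ((x.pt, ⟨x.r, by
      have h1 : Q.rank x.pt + 1 ≤ k + 2 := by
        have := Q.rank_le_of_le (Q.le_top x.pt)
        omega
      have := x.hr2
      have := hgm.monotone h1
      omega⟩) : Q.carrier × Fin (n + 2)))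
    (by
      rintro ⟨p, r, h1, h2⟩ ⟨p', r', h1', h2'⟩ h
      simp only [Prod.mk.injEq, Fin.mk.injEq] at h
      ext <;> simp [h.1, h.2])
  bot := ⟨Q.bot, 0, by rw [Q.rank_bot, hg0], by
    rw [Q.rank_bot]
    have h1 : g 0 = 0 := hg0
    have h2 : g 0 < g (0 + 1) := hgm (by omega)
    omega⟩
  top := ⟨Q.top, n + 1, by rw [hQ, hgt], by
    rw [hQ]
    have h3 : g (k + 1 + 1) = n + 2 := hgt2
    omega⟩
  bot_le := by
    intro x
    rcases eq_or_lt_of_le (Q.bot_le x.pt) with h | h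
    · exact Or.inr ⟨h, Nat.zero_le _⟩
    · exact Or.inl h
  le_top := by
    intro x
    rcases eq_or_lt_of_le (Q.le_top x.pt) with h | h
    · refine Or.inr ⟨h, ?_⟩
      show x.r ≤ n + 1
      have h2 := x.hr2
      rw [h, hQ] at h2
      have h3 : g (k + 1 + 1) = n + 2 := hgt2
      omega
    · exact Or.inl h
  rank := fun x => x.r
  rank_bot := rfl
  rank_covBy := by
    rintro x y hxy
    show y.r = x.r + 1
    rcases hxy.1.1 with h | ⟨h, hr⟩
    · -- x.pt < y.pt
      have hrk : Q.rank x.pt < Q.rank y.pt := Q.rank_lt_of_lt h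
      -- first: the ranks must be adjacent
      have hadj : Q.rank y.pt = Q.rank x.pt + 1 := by
        by_contra hne
        obtain ⟨z, hxz, hzy⟩ := Q.exists_le_covBy h
        have hzr := Q.rank_covBy _ _ hzy
        have hzx : Q.rank x.pt < Q.rank z := by
          have := Q.rank_le_of_le hxz
          omega
        have hxltz : x.pt < z := lt_of_le_of_ne hxz (fun he => by rw [← he] at hzx; omega)
        set w : StC Q g := ⟨z, g (Q.rank z), le_rfl, hgm (by omega)⟩ with hw
        have h1 : x < w := by
          refine ⟨Or.inl hxltz, ?_⟩
          rintro (hc | ⟨hc, _⟩)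
          · exact absurd (hxltz.trans hc) (lt_irrefl _)
          · exact absurd hc (ne_of_gt hxltz)
        have h2 : w < y := by
          refine ⟨Or.inl hzy.lt, ?_⟩
          rintro (hc | ⟨hc, _⟩)
          · exact absurd (hc.trans hzy.lt) (lt_irrefl _)
          · exact absurd hc (ne_of_gt hzy.lt)
        exact hxy.2 h1 h2
      -- next : y.r is at the bottom of its block
      have hy1 : y.r = g (Q.rank y.pt) := by
        by_contra hne
        have hy1' := y.hr1
        have hylt : g (Q.rank y.pt) < y.r := by omega
        set w : StC Q g := ⟨y.pt, y.r - 1, by omega, by have := y.hr2; omega⟩ with hw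
        have hwr : w.r = y.r - 1 := rfl
        have h1 : x < w := by
          refine ⟨Or.inl h, ?_⟩
          rintro (hc | ⟨hc, _⟩)
          · exact absurd (h.trans hc) (lt_irrefl _)
          · exact absurd hc (ne_of_gt h)
        have h2 : w < y := by
          refine ⟨Or.inr ⟨rfl, by omega⟩, ?_⟩
          rintro (hc | ⟨hc, hcr⟩)
          · exact absurd hc (lt_irrefl _)
          · have hx2 := x.hr2
            have : y.r ≤ y.r - 1 := hcr
            omega
        exact hxy.2 h1 h2
      -- and x.r at the top of its block
      have hx1 : x.r + 1 = g (Q.rank x.pt + 1) := by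
        by_contra hne
        have hx2 := x.hr2
        have hxlt : x.r + 1 < g (Q.rank x.pt + 1) := by omega
        set w : StC Q g := ⟨x.pt, x.r + 1, by have := x.hr1; omega, hxlt⟩ with hw
        have hwr : w.r = x.r + 1 := rfl
        have h1 : x < w := by
          refine ⟨Or.inr ⟨rfl, by omega⟩, ?_⟩
          rintro (hc | ⟨hc, hcr⟩)
          · exact absurd hc (lt_irrefl _)
          · omega
        have h2 : w < y := by
          refine ⟨Or.inl h, ?_⟩
          rintro (hc | ⟨hc, _⟩)
          · exact absurd (h.trans hc) (lt_irrefl _)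
          · exact absurd hc (ne_of_gt h)
        exact hxy.2 h1 h2
      rw [hy1, hadj, ← hx1]
    · -- same point
      have hlt : x.r < y.r := by
        rcases eq_or_lt_of_le hr with he | hlt
        · exfalso
          exact hxy.1.2 (Or.inr ⟨h.symm, by omega⟩)
        · exact hlt
      by_contra hne
      set w : StC Q g := ⟨x.pt, x.r + 1, by have := x.hr1; omega, by
        have := y.hr2
        rw [← h] at this
        omega⟩ with hw
      have hwr : w.r = x.r + 1 := rfl
      have h1 : x < w := by
        refine ⟨Or.inr ⟨rfl, by omega⟩, ?_⟩
        rintro (hc | ⟨hc, hcr⟩)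
        · exact absurd hc (lt_irrefl _)
        · omega
      have h2 : w < y := by
        refine ⟨Or.inr ⟨h, by omega⟩, ?_⟩
        rintro (hc | ⟨hc, hcr⟩)
        · exact absurd hc (h ▸ lt_irrefl _)
        · omega
      exact hxy.2 h1 h2

lemma flagNum_transfer (P Q : GradedPoset) (T S : Finset ℕ) (φ : Q.carrier → P.carrier)
    (ρ : ℕ → ℕ) (hρ : Set.InjOn ρ ↑T) (hρT : T.image ρ = S)
    (hrank : ∀ x, Q.rank x ∈ T → P.rank (φ x) = ρ (Q.rank x))
    (hsurj : ∀ y, P.rank y ∈ S → ∃ x, Q.rank x ∈ T ∧ φ x = y)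
    (hinj : ∀ x x', Q.rank x ∈ T → Q.rank x' ∈ T → φ x = φ x' → x = x')
    (hord : ∀ x x', Q.rank x ∈ T → Q.rank x' ∈ T → (φ x ≤ φ x' ↔ x ≤ x')) :
    flagNum P S = flagNum Q T := by
  classical
  set A : Set (Finset Q.carrier) := {c | IsChain (· ≤ ·) (↑c : Set Q.carrier) ∧
    c.image Q.rank = T} with hA
  set B : Set (Finset P.carrier) := {c | IsChain (· ≤ ·) (↑c : Set P.carrier) ∧
    c.image P.rank = S} with hB
  have memrank : ∀ c ∈ A, ∀ x ∈ c, Q.rank x ∈ T := by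
    intro c hc x hx
    rw [← hc.2]
    exact Finset.mem_image_of_mem _ hx
  have hBeq : B = (fun c => c.image φ) '' A := by
    apply Set.Subset.antisymm
    · -- B ⊆ image
      intro c' hc'
      have memrank' : ∀ y ∈ c', P.rank y ∈ S := by
        intro y hy
        rw [← hc'.2]
        exact Finset.mem_image_of_mem _ hy
      set g : P.carrier → Q.carrier := fun y =>
        if h : ∃ x, Q.rank x ∈ T ∧ φ x = y then h.choose else Q.bot with hg
      have hgspec : ∀ y ∈ c', Q.rank (g y) ∈ T ∧ φ (g y) = y := by
        intro y hy
        have h : ∃ x, Q.rank x ∈ T ∧ φ x = y := hsurj y (memrank' y hy)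
        simp only [hg, dif_pos h]
        exact h.choose_spec
      refine ⟨c'.image g, ⟨?_, ?_⟩, ?_⟩
      · -- chain
        intro u hu v hv huv
        simp only [Finset.coe_image, Set.mem_image, Finset.mem_coe] at hu hv
        obtain ⟨y, hy, rfl⟩ := hu
        obtain ⟨y', hy', rfl⟩ := hv
        have hyne : y ≠ y' := fun h => huv (by rw [h])
        have := hc'.1 (Finset.mem_coe.2 hy) (Finset.mem_coe.2 hy')
          (fun h => hyne ((hgspec y hy).2 ▸ (hgspec y' hy').2 ▸ h ▸ rfl))
        have t1 := (hgspec y hy).1; have t2 := (hgspec y' hy').1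
        have e1 := (hgspec y hy).2; have e2 := (hgspec y' hy').2
        rcases this with h | h
        · exact Or.inl ((hord _ _ t1 t2).1 (by rw [e1, e2]; exact h))
        · exact Or.inr ((hord _ _ t2 t1).1 (by rw [e1, e2]; exact h))
      · -- rank image = T
        have hsub : (c'.image g).image Q.rank ⊆ T := by
          intro t ht
          simp only [Finset.image_image, Finset.mem_image] at ht
          obtain ⟨y, hy, rfl⟩ := ht
          exact (hgspec y hy).1
        have himg : ((c'.image g).image Q.rank).image ρ = T.image ρ := by
          rw [hρT, Finset.image_image, Finset.image_image]
          rw [← hc'.2]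
          apply Finset.image_congr
          intro y hy
          simp only [Function.comp]
          rw [← hrank _ (hgspec y hy).1, (hgspec y hy).2]
        apply Finset.Subset.antisymm hsub
        intro t ht
        have : ρ t ∈ ((c'.image g).image Q.rank).image ρ := by
          rw [himg]; exact Finset.mem_image_of_mem _ ht
        obtain ⟨u, hu, huρ⟩ := Finset.mem_image.1 this
        rwa [← hρ (Finset.mem_coe.2 (hsub hu)) (Finset.mem_coe.2 ht) huρ]
      · -- image φ (image g c') = c'
        show (c'.image g).image φ = c'
        rw [Finset.image_image]
        rw [show c'.image (φ ∘ g) = c'.image id from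
          Finset.image_congr (fun y hy => (hgspec y hy).2)]
        exact Finset.image_id
    · -- image ⊆ B
      rintro _ ⟨c, hc, rfl⟩
      constructor
      · intro u hu v hv huv
        simp only [Finset.coe_image, Set.mem_image, Finset.mem_coe] at hu hv
        obtain ⟨x, hx, rfl⟩ := hu
        obtain ⟨x', hx', rfl⟩ := hv
        have hne : x ≠ x' := fun h => huv (by rw [h])
        have t1 := memrank c hc x hx; have t2 := memrank c hc x' hx'
        rcases hc.1 (Finset.mem_coe.2 hx) (Finset.mem_coe.2 hx') hne with h | h
        · exact Or.inl ((hord _ _ t1 t2).2 h)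
        · exact Or.inr ((hord _ _ t2 t1).2 h)
      · rw [Finset.image_image, ← hρT, ← hc.2, Finset.image_image]
        apply Finset.image_congr
        intro x hx
        exact hrank x (memrank c hc x hx)
  have hinjA : Set.InjOn (fun c => c.image φ) A := by
    intro c1 h1 c2 h2 he
    simp only at he
    ext x
    constructor
    · intro hx
      have : φ x ∈ c2.image φ := he ▸ Finset.mem_image_of_mem _ hx
      obtain ⟨x', hx', hxx⟩ := Finset.mem_image.1 this
      rwa [← hinj x' x (memrank c2 h2 x' hx') (memrank c1 h1 x hx) hxx]
    · intro hx
      have : φ x ∈ c1.image φ := he ▸ Finset.mem_image_of_mem _ hx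
      obtain ⟨x', hx', hxx⟩ := Finset.mem_image.1 this
      rwa [← hinj x' x (memrank c1 h1 x' hx') (memrank c2 h2 x hx) hxx]
  show Set.ncard B = Set.ncard A
  rw [hBeq, Set.ncard_image_of_injOn hinjA]

/-- Clamped multiplicity function. -/
def mc (n : ℕ) (m : ℕ → ℕ) (j : ℕ) : ℕ := if 1 ≤ j ∧ j ≤ n then max 1 (m j) else 1

lemma mc_pos (n : ℕ) (m : ℕ → ℕ) (j : ℕ) : 0 < mc n m j := by
  unfold mc; split <;> omega

lemma mc_eq (n : ℕ) (m : ℕ → ℕ) (j : ℕ) (h1 : 1 ≤ j) (h2 : j ≤ n) (h3 : 1 ≤ m j) :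
    mc n m j = m j := by
  unfold mc; rw [if_pos ⟨h1, h2⟩]; omega

def mcD (n : ℕ) (m : ℕ → ℕ) : Finset (ℕ × ℕ) :=
  (Finset.range (n+2) ×ˢ Finset.range ((Finset.range (n+2)).sup (mc n m))).filter
    (fun p => p.2 < mc n m p.1)

lemma mem_mcD {n : ℕ} {m : ℕ → ℕ} {p : ℕ × ℕ} :
    p ∈ mcD n m ↔ p.1 < n + 2 ∧ p.2 < mc n m p.1 := by
  simp only [mcD, Finset.mem_filter, Finset.mem_product, Finset.mem_range]
  constructor
  · rintro ⟨⟨h1, _⟩, h3⟩; exact ⟨h1, h3⟩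
  · rintro ⟨h1, h2⟩
    exact ⟨⟨h1, lt_of_lt_of_le h2 (Finset.le_sup (Finset.mem_range.2 h1))⟩, h2⟩

@[ext]
structure MCC (n : ℕ) (m : ℕ → ℕ) where
  val : ℕ × ℕ
  mem : val ∈ mcD n m

noncomputable instance (n : ℕ) (m : ℕ → ℕ) : Fintype (MCC n m) :=
  Fintype.ofInjective (fun x : MCC n m => (⟨x.val, x.mem⟩ : {p // p ∈ mcD n m}))
    (fun x y h => by cases x; cases y; simpa using h)

instance (n : ℕ) (m : ℕ → ℕ) : PartialOrder (MCC n m) where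
  le p q := p.val.1 < q.val.1 ∨ p = q
  lt p q := (p.val.1 < q.val.1 ∨ p = q) ∧ ¬ (q.val.1 < p.val.1 ∨ q = p)
  lt_iff_le_not_ge _ _ := Iff.rfl
  le_refl p := Or.inr rfl
  le_trans := by
    rintro p q r (h | h) (h' | h')
    · exact Or.inl (h.trans h')
    · exact Or.inl (h' ▸ h)
    · exact Or.inl (h ▸ h')
    · exact Or.inr (h.trans h')
  le_antisymm := by
    rintro p q (h | h) (h' | h')
    · omega
    · exact h'.symm
    · exact h
    · exact h

lemma MCC.le_iff {n : ℕ} {m : ℕ → ℕ} (x y : MCC n m) :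
    x ≤ y ↔ (x.val.1 < y.val.1 ∨ x = y) := Iff.rfl

lemma MCC.lt_iff {n : ℕ} {m : ℕ → ℕ} (x y : MCC n m) :
    x < y ↔ (x.val.1 < y.val.1 ∨ x = y) ∧ ¬ (y.val.1 < x.val.1 ∨ y = x) := Iff.rfl

lemma MCC.bound {n : ℕ} {m : ℕ → ℕ} (x : MCC n m) :
    x.val.1 < n + 2 ∧ x.val.2 < mc n m x.val.1 := mem_mcD.1 x.mem

noncomputable def multiChain (n : ℕ) (m : ℕ → ℕ) : GradedPoset where
  carrier := MCC n m
  bot := ⟨(0, 0), mem_mcD.2 ⟨by omega, mc_pos n m 0⟩⟩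
  top := ⟨(n+1, 0), mem_mcD.2 ⟨by omega, mc_pos n m (n+1)⟩⟩
  bot_le := by
    rintro ⟨⟨j, u⟩, hp⟩
    rw [MCC.le_iff]
    rcases Nat.eq_zero_or_pos j with rfl | h
    · right
      have h2 : u < mc n m 0 := (mem_mcD.1 hp).2
      have h1 : mc n m 0 = 1 := by unfold mc; simp
      have : u = 0 := by omega
      subst this
      rfl
    · exact Or.inl h
  le_top := by
    rintro ⟨⟨j, u⟩, hp⟩
    rw [MCC.le_iff]
    have hj : j < n + 2 := (mem_mcD.1 hp).1
    rcases Nat.lt_or_ge j (n+1) with h | h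
    · exact Or.inl h
    · right
      have hje : j = n + 1 := by omega
      subst hje
      have h2 : u < mc n m (n+1) := (mem_mcD.1 hp).2
      have h1 : mc n m (n+1) = 1 := by unfold mc; rw [if_neg (by omega)]
      have : u = 0 := by omega
      subst this
      rfl
  rank := fun p => p.val.1
  rank_bot := rfl
  rank_covBy := by
    rintro p q hpq
    show q.val.1 = p.val.1 + 1
    have hlt : p.val.1 < q.val.1 := by
      rcases (MCC.le_iff p q).1 hpq.1.le with h | h
      · exact h
      · exact absurd h hpq.1.ne
    by_contra hne
    have hq : q.val.1 ≤ n + 1 := by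
      have h2 : q.val.1 < n + 2 := q.bound.1
      omega
    set z : MCC n m := ⟨(p.val.1 + 1, 0), mem_mcD.2 ⟨by omega, mc_pos n m _⟩⟩ with hz
    have hz1 : z.val.1 = p.val.1 + 1 := rfl
    have h1 : p < z := by
      rw [MCC.lt_iff]
      refine ⟨Or.inl (by omega), ?_⟩
      rintro (h | h)
      · omega
      · have hh : z.val.1 = p.val.1 := by rw [h]
        omega
    have h2 : z < q := by
      rw [MCC.lt_iff]
      refine ⟨Or.inl (by omega), ?_⟩
      rintro (h | h)
      · omega
      · have hh : q.val.1 = z.val.1 := by rw [h]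
        omega
    exact hpq.2 h1 h2

lemma multiChain_le_iff (n : ℕ) (m : ℕ → ℕ) (x y : (multiChain n m).carrier) :
    x ≤ y ↔ (x.val.1 < y.val.1 ∨ x = y) := Iff.rfl

lemma multiChain_rank (n : ℕ) (m : ℕ → ℕ) (x : (multiChain n m).carrier) :
    (multiChain n m).rank x = x.val.1 := rfl

lemma multiChain_chain_unique {n : ℕ} {m : ℕ → ℕ} {c : Finset (MCC n m)}
    (hc : IsChain (· ≤ ·) (↑c : Set (MCC n m))) {x y : MCC n m}
    (hx : x ∈ c) (hy : y ∈ c) (hxy : x.val.1 = y.val.1) : x = y := by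
  by_contra hne
  rcases hc (Finset.mem_coe.2 hx) (Finset.mem_coe.2 hy) hne with h | h
  · rcases (MCC.le_iff _ _).1 h with h | h
    · omega
    · exact hne h
  · rcases (MCC.le_iff _ _).1 h with h | h
    · omega
    · exact hne h.symm

lemma flagNum_multiChain (n : ℕ) (m : ℕ → ℕ) (S : Finset ℕ) (hS : S ⊆ Finset.Icc 1 n) :
    flagNum (multiChain n m) S = ∏ j ∈ S, mc n m j := by
  classical
  have hSn : ∀ j ∈ S, 1 ≤ j ∧ j ≤ n := by
    intro j hj
    have := hS hj
    rw [Finset.mem_Icc] at this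
    exact this
  set Tset : Set (ℕ → ℕ) :=
    {g | (∀ j ∈ S, g j < mc n m j) ∧ ∀ j ∉ S, g j = 0} with hTset
  set i : (ℕ → ℕ) → Finset (MCC n m) := fun g =>
    Finset.univ.filter (fun x => x.val.1 ∈ S ∧ x.val.2 = g x.val.1) with hi
  have hrankeq : (multiChain n m).rank = (fun x : MCC n m => x.val.1) := rfl
  have himem : ∀ g (x : MCC n m), x ∈ i g ↔ x.val.1 ∈ S ∧ x.val.2 = g x.val.1 := by
    intro g x
    simp [hi]
  have hmkmem : ∀ (j v : ℕ), j ∈ S → v < mc n m j → ((j, v) ∈ mcD n m) := by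
    intro j v hj hv
    exact mem_mcD.2 ⟨by have := hSn j hj; omega, hv⟩
  have hset : {c : Finset (multiChain n m).carrier |
      IsChain (· ≤ ·) (↑c : Set (multiChain n m).carrier) ∧ c.image (multiChain n m).rank = S}
      = i '' Tset := by
    apply Set.Subset.antisymm
    · rintro c ⟨hchain, himg⟩
      rw [hrankeq] at himg
      set g : ℕ → ℕ := fun j =>
        if h : ∃ x, x ∈ c ∧ x.val.1 = j then h.choose.val.2 else 0 with hg
      have hgS : ∀ j ∈ S, ∃ x, x ∈ c ∧ x.val.1 = j := by
        intro j hj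
        rw [← himg] at hj
        obtain ⟨x, hx, hxj⟩ := Finset.mem_image.1 hj
        exact ⟨x, hx, hxj⟩
      refine ⟨g, ⟨?_, ?_⟩, ?_⟩
      · intro j hj
        have h := hgS j hj
        have hspec := h.choose_spec
        rw [hg]
        simp only [dif_pos h]
        have := h.choose.bound.2
        rw [hspec.2] at this
        exact this
      · intro j hj
        show (if h : ∃ x, x ∈ c ∧ x.val.1 = j then h.choose.val.2 else 0) = 0
        rw [dif_neg]
        rintro ⟨x, hx, rfl⟩
        exact hj (himg ▸ Finset.mem_image_of_mem _ hx)
      · ext x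
        rw [himem]
        constructor
        · rintro ⟨hj, hv⟩
          have h := hgS _ hj
          have hspec := h.choose_spec
          rw [hg] at hv
          simp only [dif_pos h] at hv
          have : x = h.choose := by
            apply MCC.ext
            apply Prod.ext
            · exact hspec.2.symm
            · exact hv
          rw [this]
          exact hspec.1
        · intro hx
          have hj : x.val.1 ∈ S := himg ▸ Finset.mem_image_of_mem _ hx
          refine ⟨hj, ?_⟩
          have h := hgS _ hj
          have hspec := h.choose_spec
          have : x = h.choose := multiChain_chain_unique hchain hx hspec.1 hspec.2.symm
          show x.val.2 = (if h' : ∃ y, y ∈ c ∧ y.val.1 = x.val.1 then h'.choose.val.2 else 0)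
          rw [dif_pos h]
          exact congrArg (fun y => y.val.2) this
    · rintro _ ⟨g, hgT, rfl⟩
      constructor
      · intro u hu v hv hne
        replace hu : u.val.1 ∈ S ∧ u.val.2 = g u.val.1 := (himem g u).1 hu
        replace hv : v.val.1 ∈ S ∧ v.val.2 = g v.val.1 := (himem g v).1 hv
        rcases lt_trichotomy u.val.1 v.val.1 with h | h | h
        · exact Or.inl ((MCC.le_iff _ _).2 (Or.inl h))
        · exfalso
          apply hne
          apply MCC.ext
          apply Prod.ext
          · exact h
          · rw [hu.2, hv.2, h]
        · exact Or.inr ((MCC.le_iff _ _).2 (Or.inl h))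
      · rw [hrankeq]
        show (i g).image (fun x : MCC n m => x.val.1) = S
        ext j
        rw [Finset.mem_image]
        constructor
        · rintro ⟨x, hx, rfl⟩
          exact ((himem g x).1 hx).1
        · intro hj
          refine ⟨⟨(j, g j), hmkmem j (g j) hj (hgT.1 j hj)⟩, ?_, rfl⟩
          rw [himem]
          exact ⟨hj, rfl⟩
  have hinj : Set.InjOn i Tset := by
    intro g hg g' hg' he
    funext j
    by_cases hj : j ∈ S
    · have hx : (⟨(j, g j), hmkmem j (g j) hj (hg.1 j hj)⟩ : MCC n m) ∈ i g := by
        rw [himem]; exact ⟨hj, rfl⟩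
      rw [he, himem] at hx
      exact hx.2
    · rw [hg.2 j hj, hg'.2 j hj]
  have hcard : Set.ncard Tset = ∏ j ∈ S, mc n m j := by
    have e : Tset ≃ ↥(S.pi fun j => Finset.range (mc n m j)) :=
      { toFun := fun g => ⟨fun j hj => g.1 j, by
          rw [Finset.mem_pi]
          intro j hj
          exact Finset.mem_range.2 (g.2.1 j hj)⟩
        invFun := fun G => ⟨fun j => if hj : j ∈ S then G.1 j hj else 0, by
          constructor
          · intro j hj
            show (if hj : j ∈ S then G.1 j hj else 0) < mc n m j
            rw [dif_pos hj]
            exact Finset.mem_range.1 (Finset.mem_pi.1 G.2 j hj)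
          · intro j hj
            show (if hj : j ∈ S then G.1 j hj else 0) = 0
            rw [dif_neg hj]⟩
        left_inv := by
          rintro ⟨g, hg⟩
          apply Subtype.ext
          funext j
          by_cases hj : j ∈ S
          · simp [dif_pos hj]
          · simp [dif_neg hj, hg.2 j hj]
        right_inv := by
          rintro ⟨G, hG⟩
          apply Subtype.ext
          funext j hj
          simp [dif_pos hj] }
    rw [← Nat.card_coe_set_eq, Nat.card_congr e, Nat.card_eq_finsetCard,
      Finset.card_pi]
    exact Finset.prod_congr rfl (fun j _ => Finset.card_range _)
  rw [flagNum, hset]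
  exact (Set.ncard_image_of_injOn hinj).trans hcard

lemma powerset_insert_sum (N₀ : Finset ℕ) (i : ℕ) (hi : i ∉ N₀) (f : Finset ℕ → ℝ) :
    ∑ S ∈ (insert i N₀).powerset, f S
      = ∑ S ∈ N₀.powerset, f S + ∑ S ∈ N₀.powerset, f (insert i S) := by
  classical
  rw [Finset.powerset_insert, Finset.sum_union, Finset.sum_image]
  · intro S1 h1 S2 h2 he
    have e1 : S1 = (insert i S1).erase i := by
      rw [Finset.erase_insert (fun h => hi (Finset.mem_powerset.1 h1 h))]
    rw [e1, he, Finset.erase_insert (fun h => hi (Finset.mem_powerset.1 h2 h))]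
  · rw [Finset.disjoint_right]
    intro S hS hS'
    obtain ⟨S₀, hS₀, rfl⟩ := Finset.mem_image.1 hS
    exact hi (Finset.mem_powerset.1 hS' (Finset.mem_insert_self i S₀))

lemma prod_update_of_not_mem {S : Finset ℕ} {i : ℕ} (hi : i ∉ S) (m : ℕ → ℕ) (t : ℕ) :
    ∏ j ∈ S, ((Function.update m i t j : ℕ) : ℝ) = ∏ j ∈ S, (m j : ℝ) :=
  Finset.prod_congr rfl (fun j hj => by
    rw [Function.update_of_ne (by rintro rfl; exact hi hj)])

lemma nonneg_of_affine {A B : ℝ} (h : ∀ t : ℕ, 1 ≤ t → 0 ≤ A + t * B) : 0 ≤ B := by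
  by_contra hB
  push_neg at hB
  obtain ⟨t, ht⟩ := exists_nat_gt (A / (-B))
  have h1 := h (t + 1) (by omega)
  have h2 : A < (t : ℝ) * (-B) := by
    rw [← div_lt_iff₀ (by linarith)] at *
    exact ht.trans_le (le_refl _)
  push_cast at h1
  nlinarith

lemma multilinear_eq_zero (N : Finset ℕ) (c : Finset ℕ → ℝ)
    (h : ∀ m : ℕ → ℕ, (∀ j, 1 ≤ m j) →
      ∑ S ∈ N.powerset, c S * ∏ j ∈ S, (m j : ℝ) = 0) :
    ∀ S ∈ N.powerset, c S = 0 := by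
  classical
  induction N using Finset.induction_on generalizing c with
  | empty =>
    intro S hS
    rw [Finset.powerset_empty, Finset.mem_singleton] at hS
    subst hS
    have := h (fun _ => 1) (fun _ => le_rfl)
    simpa using this
  | @insert i N₀ hi ih =>
    have key : ∀ m : ℕ → ℕ, (∀ j, 1 ≤ m j) →
        (∑ S ∈ N₀.powerset, c S * ∏ j ∈ S, (m j : ℝ) = 0 ∧
         ∑ S ∈ N₀.powerset, c (insert i S) * ∏ j ∈ S, (m j : ℝ) = 0) := by
      intro m hm
      set A := ∑ S ∈ N₀.powerset, c S * ∏ j ∈ S, (m j : ℝ) with hA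
      set B := ∑ S ∈ N₀.powerset, c (insert i S) * ∏ j ∈ S, (m j : ℝ) with hB
      have expand : ∀ t : ℕ, 1 ≤ t → A + t * B = 0 := by
        intro t ht
        have hup : ∀ j, 1 ≤ Function.update m i t j := by
          intro j
          by_cases hj : j = i
          · subst hj; rw [Function.update_self]; exact ht
          · rw [Function.update_of_ne hj]; exact hm j
        have := h (Function.update m i t) hup
        rw [powerset_insert_sum N₀ i hi] at this
        have e1 : ∑ S ∈ N₀.powerset, c S * ∏ j ∈ S, ((Function.update m i t j : ℕ) : ℝ) = A := by
          apply Finset.sum_congr rfl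
          intro S hS
          rw [prod_update_of_not_mem (fun hmem => hi (Finset.mem_powerset.1 hS hmem)) m t]
        have e2 : ∑ S ∈ N₀.powerset,
            c (insert i S) * ∏ j ∈ insert i S, ((Function.update m i t j : ℕ) : ℝ)
            = t * B := by
          rw [hB, Finset.mul_sum]
          apply Finset.sum_congr rfl
          intro S hS
          have hiS : i ∉ S := fun hmem => hi (Finset.mem_powerset.1 hS hmem)
          rw [Finset.prod_insert hiS, prod_update_of_not_mem hiS m t, Function.update_self]
          push_cast
          ring
        rw [e1, e2] at this
        exact this
      have h1 := expand 1 le_rfl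
      have h2 := expand 2 (by omega)
      constructor
      · push_cast at h1 h2; linarith
      · push_cast at h1 h2; linarith
    intro S hS
    rw [Finset.powerset_insert, Finset.mem_union] at hS
    rcases hS with hS | hS
    · exact ih c (fun m hm => (key m hm).1) S hS
    · obtain ⟨S₀, hS₀, rfl⟩ := Finset.mem_image.1 hS
      exact ih (fun S => c (insert i S)) (fun m hm => (key m hm).2) S₀ hS₀

section Sel
variable (P : GradedPoset) (n k : ℕ) (M : Finset ℕ)

def selSet : Finset ℕ := insert (n + 1) M

noncomputable def sel (hP : P.rank P.top = n + 1) (hM : M ⊆ Finset.Icc 1 n) : GradedPoset where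
  carrier := {x : P.carrier // P.rank x ∈ insert 0 (selSet n M)}
  fintypeCarrier := by
    classical
    exact Subtype.fintype _
  bot := ⟨P.bot, by rw [P.rank_bot]; exact Finset.mem_insert_self _ _⟩
  top := ⟨P.top, by
    rw [hP]
    exact Finset.mem_insert_of_mem (Finset.mem_insert_self _ _)⟩
  bot_le := fun x => Subtype.coe_le_coe.1 (P.bot_le x.1)
  le_top := fun x => Subtype.coe_le_coe.1 (P.le_top x.1)
  rank := fun x => ((selSet n M).filter (fun i => i ≤ P.rank x.1)).card
  rank_bot := by
    show ((selSet n M).filter (fun i => i ≤ P.rank P.bot)).card = 0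
    rw [P.rank_bot]
    rw [Finset.card_eq_zero]
    apply Finset.filter_eq_empty_iff.2
    intro i hi
    rcases Finset.mem_insert.1 hi with rfl | hi
    · omega
    · have := hM hi
      rw [Finset.mem_Icc] at this
      omega
  rank_covBy := by
    rintro x y hxy
    have hlt : x.1 < y.1 := Subtype.coe_lt_coe.2 hxy.1
    have hrlt : P.rank x.1 < P.rank y.1 := P.rank_lt_of_lt hlt
    have hry : P.rank y.1 ∈ selSet n M := by
      rcases Finset.mem_insert.1 y.2 with h | h
      · omega
      · exact h
    -- claim: the only element of selSet in (rank x, rank y] is rank y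
    have hclaim : ∀ i ∈ selSet n M, P.rank x.1 < i → i ≤ P.rank y.1 → i = P.rank y.1 := by
      intro i hi h1 h2
      by_contra hne
      obtain ⟨z, hxz, hzy, hz⟩ := P.exists_rank_between (r := i) hlt.le (by omega) (by omega)
      have hxzlt : x.1 < z := lt_of_le_of_ne hxz (fun he => by rw [← he] at hz; omega)
      have hzylt : z < y.1 := lt_of_le_of_ne hzy (fun he => by rw [he] at hz; omega)
      have hmem : P.rank z ∈ insert 0 (selSet n M) := by
        rw [hz]; exact Finset.mem_insert_of_mem hi
      have e1 : x < (⟨z, hmem⟩ : {x : P.carrier // P.rank x ∈ insert 0 (selSet n M)}) :=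
        Subtype.coe_lt_coe.1 hxzlt
      have e2 : (⟨z, hmem⟩ : {x : P.carrier // P.rank x ∈ insert 0 (selSet n M)}) < y :=
        Subtype.coe_lt_coe.1 hzylt
      exact hxy.2 e1 e2
    show ((selSet n M).filter (fun i => i ≤ P.rank y.1)).card
      = ((selSet n M).filter (fun i => i ≤ P.rank x.1)).card + 1
    have hsplit : (selSet n M).filter (fun i => i ≤ P.rank y.1)
        = (selSet n M).filter (fun i => i ≤ P.rank x.1) ∪ {P.rank y.1} := by
      ext i
      simp only [Finset.mem_filter, Finset.mem_union, Finset.mem_singleton]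
      constructor
      · rintro ⟨hi, h2⟩
        rcases Nat.lt_or_ge (P.rank x.1) i with h | h
        · exact Or.inr (hclaim i hi h h2)
        · exact Or.inl ⟨hi, h⟩
      · rintro (⟨hi, h⟩ | rfl)
        · exact ⟨hi, by omega⟩
        · exact ⟨hry, le_rfl⟩
    rw [hsplit, Finset.card_union_of_disjoint, Finset.card_singleton]
    rw [Finset.disjoint_singleton_right, Finset.mem_filter]
    rintro ⟨-, h⟩
    omega

lemma sel_rank_top (hP : P.rank P.top = n + 1) (hM : M ⊆ Finset.Icc 1 n) (hk : k = M.card) :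
    (sel P n M hP hM).rank (sel P n M hP hM).top = k + 1 := by
  show ((selSet n M).filter (fun i => i ≤ P.rank P.top)).card = k + 1
  rw [hP]
  have : (selSet n M).filter (fun i => i ≤ n + 1) = selSet n M := by
    apply Finset.filter_eq_self.2
    intro i hi
    rcases Finset.mem_insert.1 hi with rfl | hi
    · omega
    · have := hM hi
      rw [Finset.mem_Icc] at this
      omega
  rw [this, selSet, Finset.card_insert_of_notMem, hk]
  intro h
  have := hM h
  rw [Finset.mem_Icc] at this
  omega

end Sel


section FlagIdent

lemma flagNum_stretch (Q : GradedPoset) (g : ℕ → ℕ) (k n : ℕ)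
    (hQ : Q.rank Q.top = k + 1) (hg0 : g 0 = 0) (hgm : StrictMono g)
    (hgt : g (k + 1) = n + 1) (hgt2 : g (k + 2) = n + 2)
    (T : Finset ℕ) (hT : T ⊆ Finset.Icc 1 k) :
    flagNum (stretch Q g k n hQ hg0 hgm hgt hgt2) (T.image g) = flagNum Q T := by
  apply flagNum_transfer (stretch Q g k n hQ hg0 hgm hgt hgt2) Q T (T.image g)
    (fun x => ⟨x, g (Q.rank x), le_rfl, hgm (Nat.lt_succ_self _)⟩) g
  · exact hgm.injective.injOn
  · rfl
  · intro x _
    rfl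
  · -- hsurj
    intro y hy
    obtain ⟨t, ht, hrt⟩ := Finset.mem_image.1 hy
    have hyr : y.r = g t := hrt.symm
    have h1 := y.hr1
    have h2 := y.hr2
    have hrank : Q.rank y.pt = t := by
      by_contra hne
      rcases Nat.lt_or_ge (Q.rank y.pt) t with hc | hc
      · have := hgm.monotone (show Q.rank y.pt + 1 ≤ t by omega)
        omega
      · have := hgm (show t < Q.rank y.pt by omega)
        omega
    refine ⟨y.pt, by rw [hrank]; exact ht, ?_⟩
    exact StC.ext rfl (by show g (Q.rank y.pt) = y.r; rw [hrank]; exact hyr.symm)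
  · intro x x' _ _ h
    exact congrArg StC.pt h
  · intro x x' _ _
    constructor
    · intro h
      rcases (StC.le_iff _ _).1 h with h | ⟨h, _⟩
      · exact h.le
      · exact le_of_eq h
    · intro h
      rcases eq_or_lt_of_le h with rfl | h
      · exact le_refl _
      · exact (StC.le_iff _ _).2 (Or.inl h)

lemma stretch_rank_top (Q : GradedPoset) (g : ℕ → ℕ) (k n : ℕ)
    (hQ : Q.rank Q.top = k + 1) (hg0 : g 0 = 0) (hgm : StrictMono g)
    (hgt : g (k + 1) = n + 1) (hgt2 : g (k + 2) = n + 2) :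
    (stretch Q g k n hQ hg0 hgm hgt hgt2).rank
      (stretch Q g k n hQ hg0 hgm hgt hgt2).top = n + 1 := rfl

lemma gamma_mem {k : ℕ} {M : Finset ℕ} {γ : ℕ → ℕ}
    (hγbij : (Finset.Icc 1 k).image γ = M) {j : ℕ} (hj : j ∈ Finset.Icc 1 k) : γ j ∈ M :=
  hγbij ▸ Finset.mem_image_of_mem γ hj

lemma gamma_filter_card {n k : ℕ} {M : Finset ℕ} {γ : ℕ → ℕ}
    (hMsub : M ⊆ Finset.Icc 1 n)
    (hγmono : StrictMonoOn γ ↑(Finset.Icc 1 k))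
    (hγbij : (Finset.Icc 1 k).image γ = M) {j : ℕ} (hj : j ∈ Finset.Icc 1 k) :
    ((selSet n M).filter (fun i => i ≤ γ j)).card = j := by
  have hγjM : γ j ∈ M := gamma_mem hγbij hj
  have hγjn : γ j ≤ n := (Finset.mem_Icc.1 (hMsub hγjM)).2
  have h1 : (selSet n M).filter (fun i => i ≤ γ j) = M.filter (fun i => i ≤ γ j) := by
    rw [selSet, Finset.filter_insert, if_neg (by omega)]
  have h2 : M.filter (fun i => i ≤ γ j) = (Finset.Icc 1 j).image γ := by
    ext i
    simp only [Finset.mem_filter, Finset.mem_image]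
    constructor
    · rintro ⟨hiM, hle⟩
      rw [← hγbij] at hiM
      obtain ⟨t, ht, rfl⟩ := Finset.mem_image.1 hiM
      have htj : t ≤ j := by
        by_contra hc
        have := hγmono (Finset.mem_coe.2 hj) (Finset.mem_coe.2 ht) (by omega)
        omega
      refine ⟨t, ?_, rfl⟩
      rw [Finset.mem_Icc] at ht ⊢
      omega
    · rintro ⟨t, ht, rfl⟩
      have hjk := Finset.mem_Icc.1 hj
      have htk : t ∈ Finset.Icc 1 k := by
        rw [Finset.mem_Icc] at ht ⊢
        omega
      refine ⟨gamma_mem hγbij htk, ?_⟩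
      rcases eq_or_lt_of_le (Finset.mem_Icc.1 ht).2 with rfl | hlt
      · exact le_rfl
      · exact (hγmono (Finset.mem_coe.2 htk) (Finset.mem_coe.2 hj) hlt).le
  rw [h1, h2, Finset.card_image_of_injOn, Nat.card_Icc]
  · omega
  · apply Set.InjOn.mono _ hγmono.injOn
    intro t ht
    rw [Finset.mem_coe, Finset.mem_Icc] at ht ⊢
    have := (Finset.mem_Icc.1 hj)
    omega

lemma flagNum_sel (P : GradedPoset) (n k : ℕ) (M : Finset ℕ) (γ : ℕ → ℕ)
    (hP : P.rank P.top = n + 1) (hMsub : M ⊆ Finset.Icc 1 n)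
    (hγmono : StrictMonoOn γ ↑(Finset.Icc 1 k))
    (hγbij : (Finset.Icc 1 k).image γ = M) (hk : k = M.card)
    (T : Finset ℕ) (hT : T ⊆ Finset.Icc 1 k) :
    flagNum P (T.image γ) = flagNum (sel P n M hP hMsub) T := by
  apply flagNum_transfer P (sel P n M hP hMsub) T (T.image γ) (fun x => x.1) γ
  · exact Set.InjOn.mono (fun t ht => Finset.mem_coe.2 (hT (Finset.mem_coe.1 ht))) hγmono.injOn
  · rfl
  · -- hrank
    intro x hx
    have hxT := hT hx
    have hxk := Finset.mem_Icc.1 hxT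
    have hsel : (sel P n M hP hMsub).rank x
        = ((selSet n M).filter (fun i => i ≤ P.rank x.1)).card := rfl
    rcases Finset.mem_insert.1 x.2 with h0 | hs
    · -- rank 0 : impossible
      exfalso
      have : (sel P n M hP hMsub).rank x = 0 := by
        rw [hsel, h0, Finset.card_eq_zero]
        apply Finset.filter_eq_empty_iff.2
        intro i hi
        rcases Finset.mem_insert.1 hi with rfl | hi
        · omega
        · have := Finset.mem_Icc.1 (hMsub hi)
          omega
      omega
    · rcases Finset.mem_insert.1 hs with htop | hm
      · -- rank n+1 : impossible
        exfalso
        have : (sel P n M hP hMsub).rank x = k + 1 := by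
          rw [hsel, htop]
          have he : (selSet n M).filter (fun i => i ≤ n + 1) = selSet n M := by
            apply Finset.filter_eq_self.2
            intro i hi
            rcases Finset.mem_insert.1 hi with rfl | hi
            · omega
            · have := Finset.mem_Icc.1 (hMsub hi)
              omega
          rw [he, selSet, Finset.card_insert_of_notMem, ← hk]
          intro h
          have := Finset.mem_Icc.1 (hMsub h)
          omega
        omega
      · -- rank ∈ M
        have hm2 : P.rank x.1 ∈ (Finset.Icc 1 k).image γ := by
          rw [hγbij]
          exact hm
        obtain ⟨t, ht, hrt⟩ := Finset.mem_image.1 hm2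
        have : (sel P n M hP hMsub).rank x = t := by
          rw [hsel, ← hrt]
          exact gamma_filter_card hMsub hγmono hγbij ht
        have hgoal : γ ((sel P n M hP hMsub).rank x) = γ t := congrArg γ this
        rw [hgoal]
        exact hrt.symm
  · -- hsurj
    intro y hy
    obtain ⟨t, ht, hrt⟩ := Finset.mem_image.1 hy
    have htk : t ∈ Finset.Icc 1 k := hT ht
    have hmem : P.rank y ∈ insert 0 (selSet n M) := by
      rw [← hrt]
      exact Finset.mem_insert_of_mem
        (Finset.mem_insert_of_mem (gamma_mem hγbij htk))
    refine ⟨⟨y, hmem⟩, ?_, rfl⟩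
    have : (sel P n M hP hMsub).rank ⟨y, hmem⟩
        = ((selSet n M).filter (fun i => i ≤ P.rank y)).card := rfl
    rw [this, ← hrt, gamma_filter_card hMsub hγmono hγbij htk]
    exact ht
  · intro x x' _ _ h
    exact Subtype.ext h
  · intro x x' _ _
    exact Subtype.coe_le_coe

lemma sum_reindex (n k : ℕ) (M : Finset ℕ) (γ : ℕ → ℕ)
    (b F : Finset ℕ → ℝ) (hb : ∀ S, b S ≠ 0 → S ⊆ M)
    (hMsub : M ⊆ Finset.Icc 1 n)
    (hγmono : StrictMonoOn γ ↑(Finset.Icc 1 k))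
    (hγbij : (Finset.Icc 1 k).image γ = M) :
    ∑ S ∈ (Finset.Icc 1 n).powerset, b S * F S
      = ∑ T ∈ (Finset.Icc 1 k).powerset, b (T.image γ) * F (T.image γ) := by
  classical
  have hiinj : ∀ T1 ∈ (Finset.Icc 1 k).powerset, ∀ T2 ∈ (Finset.Icc 1 k).powerset,
      T1.image γ = T2.image γ → T1 = T2 := by
    intro T1 h1 T2 h2 he
    rw [Finset.mem_powerset] at h1 h2
    ext t
    constructor
    · intro ht
      have : γ t ∈ T2.image γ := he ▸ Finset.mem_image_of_mem γ ht
      obtain ⟨t', ht', he'⟩ := Finset.mem_image.1 this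
      rwa [← hγmono.injOn (Finset.mem_coe.2 (h2 ht')) (Finset.mem_coe.2 (h1 ht)) he']
    · intro ht
      have : γ t ∈ T1.image γ := he ▸ Finset.mem_image_of_mem γ ht
      obtain ⟨t', ht', he'⟩ := Finset.mem_image.1 this
      rwa [← hγmono.injOn (Finset.mem_coe.2 (h1 ht')) (Finset.mem_coe.2 (h2 ht)) he']
  have himg : ∑ S ∈ ((Finset.Icc 1 k).powerset).image (fun T => T.image γ), b S * F S
      = ∑ T ∈ (Finset.Icc 1 k).powerset, b (T.image γ) * F (T.image γ) :=
    Finset.sum_image hiinj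
  rw [← himg]
  apply (Finset.sum_subset _ _).symm
  · intro S hS
    obtain ⟨T, hT, rfl⟩ := Finset.mem_image.1 hS
    rw [Finset.mem_powerset] at hT ⊢
    intro i hi
    obtain ⟨t, ht, rfl⟩ := Finset.mem_image.1 hi
    exact hMsub (gamma_mem hγbij (hT ht))
  · intro S hS hSnot
    by_contra hne
    have hbS : b S ≠ 0 := fun h => hne (by rw [h, zero_mul])
    have hSM : S ⊆ M := hb S hbS
    apply hSnot
    rw [Finset.mem_image]
    refine ⟨(Finset.Icc 1 k).filter (fun t => γ t ∈ S), by
      rw [Finset.mem_powerset]; exact Finset.filter_subset _ _, ?_⟩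
    ext i
    rw [Finset.mem_image]
    constructor
    · rintro ⟨t, ht, rfl⟩
      exact (Finset.mem_filter.1 ht).2
    · intro hi
      have : i ∈ M := hSM hi
      rw [← hγbij] at this
      obtain ⟨t, ht, rfl⟩ := Finset.mem_image.1 this
      exact ⟨t, Finset.mem_filter.2 ⟨ht, hi⟩, rfl⟩

end FlagIdent

theorem stmt_18 (n : ℕ) (hn : 1 ≤ n) (a : Finset ℕ → ℝ)
    (ha : ∀ S : Finset ℕ, ¬ S ⊆ Finset.Icc 1 n → a S = 0)
    (M : Finset ℕ)
    (hM : ∀ i : ℕ, i ∈ M ↔ i ∈ Finset.Icc 1 n ∧ ∃ S : Finset ℕ, a S ≠ 0 ∧ i ∈ S)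
    (k : ℕ) (hk : k = M.card)
    (γ : ℕ → ℕ) (hγmono : StrictMonoOn γ ↑(Finset.Icc 1 k))
    (hγbij : (Finset.Icc 1 k).image γ = M)
    (a' : Finset ℕ → ℝ)
    (ha' : a' = fun T => if T ⊆ Finset.Icc 1 k then a (T.image γ) else 0) :
    (a ∈ coneK (n + 1) ↔ a' ∈ coneK (k + 1)) ∧
    (IsExtremeRay (coneK (n + 1)) a ↔ IsExtremeRay (coneK (k + 1)) a') := by
  classical
  have hMsub : M ⊆ Finset.Icc 1 n := fun i hi => ((hM i).1 hi).1
  have hsuppa : ∀ S, a S ≠ 0 → S ⊆ M := by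
    intro S hS i hiS
    have hSn : S ⊆ Finset.Icc 1 n := by
      by_contra hc
      exact hS (ha S hc)
    exact (hM i).2 ⟨hSn hiS, S, hS, hiS⟩
  -- the extension of γ to a globally strictly monotone map
  set ghat : ℕ → ℕ :=
    fun j => if j = 0 then 0 else if j ≤ k then γ j else n + 1 + (j - (k + 1)) with hghat
  have hgk : ∀ j, 1 ≤ j → j ≤ k → (1 ≤ γ j ∧ γ j ≤ n) := by
    intro j h1 h2
    exact Finset.mem_Icc.1 (hMsub (gamma_mem hγbij (Finset.mem_Icc.2 ⟨h1, h2⟩)))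
  have hghat0 : ghat 0 = 0 := rfl
  have hghatk1 : ghat (k + 1) = n + 1 := by
    rw [hghat]
    simp only []
    rw [if_neg (by omega), if_neg (by omega)]
    omega
  have hghatk2 : ghat (k + 2) = n + 2 := by
    rw [hghat]
    simp only []
    rw [if_neg (by omega), if_neg (by omega)]
    omega
  have hghateq : ∀ t ∈ Finset.Icc 1 k, ghat t = γ t := by
    intro t ht
    have := Finset.mem_Icc.1 ht
    rw [hghat]
    simp only []
    rw [if_neg (by omega), if_pos (by omega)]
  have hghatmono : StrictMono ghat := by
    apply strictMono_nat_of_lt_succ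
    intro j
    rcases Nat.eq_zero_or_pos j with rfl | hj
    · show ghat 0 < ghat 1
      rw [hghat0]
      by_cases h1 : 1 ≤ k
      · rw [hghateq 1 (Finset.mem_Icc.2 ⟨le_rfl, h1⟩)]
        have := hgk 1 le_rfl h1
        omega
      · have hk0 : k = 0 := by omega
        have : ghat 1 = n + 1 + (1 - (k + 1)) := by
          rw [hghat]
          simp only []
          rw [if_neg (by omega), if_neg (by omega)]
        omega
    · by_cases h2 : j + 1 ≤ k
      · rw [hghateq j (Finset.mem_Icc.2 ⟨hj, by omega⟩),
          hghateq (j+1) (Finset.mem_Icc.2 ⟨by omega, h2⟩)]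
        exact hγmono (by rw [Finset.mem_coe, Finset.mem_Icc]; omega)
          (by rw [Finset.mem_coe, Finset.mem_Icc]; omega) (by omega)
      · have hup : ghat (j + 1) = n + 1 + (j + 1 - (k + 1)) := by
          rw [hghat]
          simp only []
          rw [if_neg (by omega), if_neg (by omega)]
        by_cases h3 : j ≤ k
        · rw [hghateq j (Finset.mem_Icc.2 ⟨hj, h3⟩), hup]
          have := hgk j hj h3
          omega
        · have hlow : ghat j = n + 1 + (j - (k + 1)) := by
            rw [hghat]
            simp only []
            rw [if_neg (by omega), if_neg (by omega)]
          rw [hlow, hup]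
          omega
  have himageeq : ∀ T : Finset ℕ, T ⊆ Finset.Icc 1 k → T.image ghat = T.image γ :=
    fun T hT => Finset.image_congr (fun t ht => hghateq t (hT ht))
  -- key summation identities
  have hstretchsum : ∀ (b : Finset ℕ → ℝ), (∀ S, b S ≠ 0 → S ⊆ M) →
      ∀ (Q : GradedPoset) (hQ : Q.rank Q.top = k + 1),
      ∑ S ∈ (Finset.Icc 1 n).powerset,
          b S * (flagNum (stretch Q ghat k n hQ hghat0 hghatmono hghatk1 hghatk2) S : ℝ)
        = ∑ T ∈ (Finset.Icc 1 k).powerset, b (T.image γ) * (flagNum Q T : ℝ) := by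
    intro b hb Q hQ
    rw [sum_reindex n k M γ _ _ hb hMsub hγmono hγbij]
    apply Finset.sum_congr rfl
    intro T hT
    rw [Finset.mem_powerset] at hT
    have h1 : flagNum (stretch Q ghat k n hQ hghat0 hghatmono hghatk1 hghatk2) (T.image γ)
        = flagNum Q T := by
      rw [← himageeq T hT]
      exact flagNum_stretch Q ghat k n hQ hghat0 hghatmono hghatk1 hghatk2 T hT
    rw [h1]
  have hselsum : ∀ (b : Finset ℕ → ℝ), (∀ S, b S ≠ 0 → S ⊆ M) →
      ∀ (P : GradedPoset) (hP : P.rank P.top = n + 1),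
      ∑ S ∈ (Finset.Icc 1 n).powerset, b S * (flagNum P S : ℝ)
        = ∑ T ∈ (Finset.Icc 1 k).powerset,
            b (T.image γ) * (flagNum (sel P n M hP hMsub) T : ℝ) := by
    intro b hb P hP
    rw [sum_reindex n k M γ _ _ hb hMsub hγmono hγbij]
    apply Finset.sum_congr rfl
    intro T hT
    rw [Finset.mem_powerset] at hT
    rw [flagNum_sel P n k M γ hP hMsub hγmono hγbij hk T hT]
  have ha'supp : ∀ T, ¬ T ⊆ Finset.Icc 1 k → a' T = 0 := by
    intro T hT
    rw [ha']
    exact if_neg hT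
  have ha'val : ∀ T, T ⊆ Finset.Icc 1 k → a' T = a (T.image γ) := by
    intro T hT
    rw [ha']
    exact if_pos hT
  -- preimage operator
  set γPre : Finset ℕ → Finset ℕ :=
    fun S => (Finset.Icc 1 k).filter (fun t => γ t ∈ S) with hγPredef
  have hγPre_sub : ∀ S, γPre S ⊆ Finset.Icc 1 k := fun S => Finset.filter_subset _ _
  have hγPre_img : ∀ S, S ⊆ M → (γPre S).image γ = S := by
    intro S hSM
    ext i
    rw [Finset.mem_image]
    constructor
    · rintro ⟨t, ht, rfl⟩
      exact (Finset.mem_filter.1 ht).2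
    · intro hi
      have : i ∈ M := hSM hi
      rw [← hγbij] at this
      obtain ⟨t, ht, rfl⟩ := Finset.mem_image.1 this
      exact ⟨t, Finset.mem_filter.2 ⟨ht, hi⟩, rfl⟩
  have hPre_of_img : ∀ T, T ⊆ Finset.Icc 1 k → γPre (T.image γ) = T := by
    intro T hT
    ext t
    rw [hγPredef]
    simp only [Finset.mem_filter, Finset.mem_image]
    constructor
    · rintro ⟨htk, t', ht', he⟩
      rwa [← hγmono.injOn (Finset.mem_coe.2 (hT ht')) (Finset.mem_coe.2 htk) he]
    · intro ht
      exact ⟨hT ht, t, ht, rfl⟩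
  have himgM : ∀ T, T ⊆ Finset.Icc 1 k → T.image γ ⊆ M := by
    intro T hT i hi
    obtain ⟨t, ht, rfl⟩ := Finset.mem_image.1 hi
    exact gamma_mem hγbij (hT ht)
  -- Part 1
  have part1 : a ∈ coneK (n + 1) ↔ a' ∈ coneK (k + 1) := by
    simp only [coneK, Set.mem_setOf_eq, Nat.add_sub_cancel]
    constructor
    · rintro ⟨h1, h2⟩
      refine ⟨ha'supp, ?_⟩
      intro Q hQ
      have e1 : ∑ T ∈ (Finset.Icc 1 k).powerset, a' T * (flagNum Q T : ℝ)
          = ∑ T ∈ (Finset.Icc 1 k).powerset, a (T.image γ) * (flagNum Q T : ℝ) := by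
        apply Finset.sum_congr rfl
        intro T hT
        rw [ha'val T (Finset.mem_powerset.1 hT)]
      rw [e1, ← hstretchsum a hsuppa Q hQ]
      exact h2 _ rfl
    · rintro ⟨h1, h2⟩
      refine ⟨ha, ?_⟩
      intro P hP
      rw [hselsum a hsuppa P hP]
      have e1 : ∑ T ∈ (Finset.Icc 1 k).powerset,
            a (T.image γ) * (flagNum (sel P n M hP hMsub) T : ℝ)
          = ∑ T ∈ (Finset.Icc 1 k).powerset,
            a' T * (flagNum (sel P n M hP hMsub) T : ℝ) := by
        apply Finset.sum_congr rfl
        intro T hT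
        rw [ha'val T (Finset.mem_powerset.1 hT)]
      rw [e1]
      exact h2 _ (sel_rank_top P n k M hP hMsub hk)
  refine ⟨part1, ?_⟩
  -- push-forward of cone membership along γPre (used for the first direction)
  have hmk1 : ∀ b' : Finset ℕ → ℝ, b' ∈ coneK (k + 1) →
      (fun S => if S ⊆ M then b' (γPre S) else 0) ∈ coneK (n + 1) := by
    intro b' hb'
    have hsupp : ∀ S, (if S ⊆ M then b' (γPre S) else 0) ≠ 0 → S ⊆ M := by
      intro S hS
      by_contra hc
      exact hS (if_neg hc)
    constructor
    · intro S hS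
      rw [Nat.add_sub_cancel] at hS
      apply if_neg
      intro hSM
      exact hS (hSM.trans hMsub)
    · intro P hP
      rw [Nat.add_sub_cancel]
      rw [hselsum _ hsupp P hP]
      have e1 : ∀ T ∈ (Finset.Icc 1 k).powerset,
          (if (T.image γ) ⊆ M then b' (γPre (T.image γ)) else 0)
            * (flagNum (sel P n M hP hMsub) T : ℝ)
          = b' T * (flagNum (sel P n M hP hMsub) T : ℝ) := by
        intro T hT
        rw [Finset.mem_powerset] at hT
        rw [if_pos (himgM T hT), hPre_of_img T hT]
      rw [Finset.sum_congr rfl e1]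
      have := hb'.2 (sel P n M hP hMsub) (sel_rank_top P n k M hP hMsub hk)
      rw [Nat.add_sub_cancel] at this
      exact this
  -- pull-back of cone membership along image γ (used for the second direction)
  have hmk2 : ∀ b : Finset ℕ → ℝ, b ∈ coneK (n + 1) → (∀ S, b S ≠ 0 → S ⊆ M) →
      (fun T => if T ⊆ Finset.Icc 1 k then b (T.image γ) else 0) ∈ coneK (k + 1) := by
    intro b hb hbM
    constructor
    · intro T hT
      rw [Nat.add_sub_cancel] at hT
      exact if_neg hT
    · intro Q hQ
      rw [Nat.add_sub_cancel]
      have e1 : ∀ T ∈ (Finset.Icc 1 k).powerset,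
          (if T ⊆ Finset.Icc 1 k then b (T.image γ) else 0) * (flagNum Q T : ℝ)
          = b (T.image γ) * (flagNum Q T : ℝ) := by
        intro T hT
        rw [if_pos (Finset.mem_powerset.1 hT)]
      rw [Finset.sum_congr rfl e1, ← hstretchsum b hbM Q hQ]
      have := hb.2 (stretch Q ghat k n hQ hghat0 hghatmono hghatk1 hghatk2) rfl
      rw [Nat.add_sub_cancel] at this
      exact this
  constructor
  · -- a extreme → a' extreme
    rintro ⟨haK, hane, hext⟩
    refine ⟨part1.1 haK, ?_, ?_⟩
    · -- a' ≠ 0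
      have : ∃ S, a S ≠ 0 := by
        by_contra hc
        push_neg at hc
        exact hane (funext hc)
      obtain ⟨S, hS⟩ := this
      have hSM := hsuppa S hS
      intro hc
      apply hS
      have h0 : a' (γPre S) = 0 := by rw [hc]; rfl
      rwa [ha'val _ (hγPre_sub S), hγPre_img S hSM] at h0
    · intro G' H' hG' hH' hsum
      set G : Finset ℕ → ℝ := fun S => if S ⊆ M then G' (γPre S) else 0 with hGdef
      set H : Finset ℕ → ℝ := fun S => if S ⊆ M then H' (γPre S) else 0 with hHdef
      have haGH : a = G + H := by
        funext S
        show a S = G S + H S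
        by_cases hSM : S ⊆ M
        · have h := congrFun hsum (γPre S)
          rw [ha'val _ (hγPre_sub S), hγPre_img S hSM] at h
          rw [hGdef, hHdef]
          simp only [if_pos hSM]
          exact h
        · have h0 : a S = 0 := by
            by_contra hc
            exact hSM (hsuppa S hc)
          rw [hGdef, hHdef]
          simp only [if_neg hSM]
          rw [h0]
          norm_num
      obtain ⟨⟨c, hc0, hcG⟩, ⟨d, hd0, hdH⟩⟩ :=
        hext G H (hmk1 G' hG') (hmk1 H' hH') haGH
      have hconv : ∀ (b' : Finset ℕ → ℝ) (e : ℝ), b' ∈ coneK (k + 1) →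
          ((fun S => if S ⊆ M then b' (γPre S) else 0) = e • a) → b' = e • a' := by
        intro b' e hb' hbe
        funext T
        show b' T = e * a' T
        by_cases hT : T ⊆ Finset.Icc 1 k
        · have h1 := congrFun hbe (T.image γ)
          simp only [if_pos (himgM T hT), hPre_of_img T hT] at h1
          rw [h1, Pi.smul_apply, smul_eq_mul, ha'val T hT]
        · rw [ha'supp T hT, hb'.1 T (by rw [Nat.add_sub_cancel]; exact hT), mul_zero]
      exact ⟨⟨c, hc0, hconv G' c hG' hcG⟩, ⟨d, hd0, hconv H' d hH' hdH⟩⟩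
  · -- a' extreme → a extreme
    rintro ⟨ha'K, ha'ne, hext⟩
    have haK : a ∈ coneK (n + 1) := part1.2 ha'K
    refine ⟨haK, ?_, ?_⟩
    · -- a ≠ 0
      have : ∃ T, a' T ≠ 0 := by
        by_contra hc
        push_neg at hc
        exact ha'ne (funext hc)
      obtain ⟨T, hT⟩ := this
      have hTs : T ⊆ Finset.Icc 1 k := by
        by_contra hc
        exact hT (ha'supp T hc)
      intro hc
      apply hT
      rw [ha'val T hTs, hc]
      rfl
    · intro G H hGK hHK hsum
      -- Step A : supports of G and H are contained in subsets of M
      have hflagprod : ∀ (m : ℕ → ℕ), (∀ j, 1 ≤ m j) → ∀ S ∈ (Finset.Icc 1 n).powerset,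
          (flagNum (multiChain n m) S : ℝ) = ∏ j ∈ S, (m j : ℝ) := by
        intro m hm S hS
        rw [Finset.mem_powerset] at hS
        rw [flagNum_multiChain n m S hS]
        push_cast
        apply Finset.prod_congr rfl
        intro j hj
        have := Finset.mem_Icc.1 (hS hj)
        rw [mc_eq n m j this.1 this.2 (hm j)]
      have hcone_prod : ∀ (b : Finset ℕ → ℝ), b ∈ coneK (n + 1) →
          ∀ (m : ℕ → ℕ), (∀ j, 1 ≤ m j) →
          0 ≤ ∑ S ∈ (Finset.Icc 1 n).powerset, b S * ∏ j ∈ S, (m j : ℝ) := by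
        intro b hb m hm
        have h0 := hb.2 (multiChain n m) rfl
        rw [Nat.add_sub_cancel] at h0
        have e1 : ∀ S ∈ (Finset.Icc 1 n).powerset,
            b S * (flagNum (multiChain n m) S : ℝ) = b S * ∏ j ∈ S, (m j : ℝ) := by
          intro S hS
          rw [hflagprod m hm S hS]
        rwa [Finset.sum_congr rfl e1] at h0
      have hsupp : ∀ (G₁ H₁ : Finset ℕ → ℝ), G₁ ∈ coneK (n + 1) → H₁ ∈ coneK (n + 1) →
          a = G₁ + H₁ → ∀ S, G₁ S ≠ 0 → S ⊆ M := by
        intro G₁ H₁ hG₁ hH₁ hs S hGS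
        have hSn : S ⊆ Finset.Icc 1 n := by
          by_contra hc
          exact hGS (hG₁.1 S (by rw [Nat.add_sub_cancel]; exact hc))
        intro i hiS
        by_contra hiM
        have hin : i ∈ Finset.Icc 1 n := hSn hiS
        set N₀ : Finset ℕ := (Finset.Icc 1 n).erase i with hN₀
        have hiN₀ : i ∉ N₀ := Finset.notMem_erase i _
        have hNins : insert i N₀ = Finset.Icc 1 n := Finset.insert_erase hin
        have hsplit : ∀ (b : Finset ℕ → ℝ) (m : ℕ → ℕ), (∀ j, 1 ≤ m j) → ∀ t : ℕ, 1 ≤ t →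
            ∑ S₀ ∈ (Finset.Icc 1 n).powerset,
                b S₀ * ∏ j ∈ S₀, ((Function.update m i t j : ℕ) : ℝ)
            = (∑ S₀ ∈ N₀.powerset, b S₀ * ∏ j ∈ S₀, (m j : ℝ))
              + t * ∑ S₀ ∈ N₀.powerset, b (insert i S₀) * ∏ j ∈ S₀, (m j : ℝ) := by
          intro b m hm t ht
          rw [← hNins, powerset_insert_sum N₀ i hiN₀]
          congr 1
          · apply Finset.sum_congr rfl
            intro S₀ hS₀
            rw [prod_update_of_not_mem
              (fun hmem => hiN₀ (Finset.mem_powerset.1 hS₀ hmem)) m t]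
          · rw [Finset.mul_sum]
            apply Finset.sum_congr rfl
            intro S₀ hS₀
            have hiS₀ : i ∉ S₀ := fun hmem => hiN₀ (Finset.mem_powerset.1 hS₀ hmem)
            rw [Finset.prod_insert hiS₀, prod_update_of_not_mem hiS₀ m t,
              Function.update_self]
            push_cast
            ring
        have hBnonneg : ∀ (b : Finset ℕ → ℝ), b ∈ coneK (n + 1) →
            ∀ (m : ℕ → ℕ), (∀ j, 1 ≤ m j) →
            0 ≤ ∑ S₀ ∈ N₀.powerset, b (insert i S₀) * ∏ j ∈ S₀, (m j : ℝ) := by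
          intro b hb m hm
          apply nonneg_of_affine (A := ∑ S₀ ∈ N₀.powerset, b S₀ * ∏ j ∈ S₀, (m j : ℝ))
          intro t ht
          have hup : ∀ j, 1 ≤ Function.update m i t j := by
            intro j
            by_cases hj : j = i
            · subst hj; rw [Function.update_self]; exact ht
            · rw [Function.update_of_ne hj]; exact hm j
          have h0 := hcone_prod b hb (Function.update m i t) hup
          rwa [hsplit b m hm t ht] at h0
        have hBzero : ∀ (m : ℕ → ℕ), (∀ j, 1 ≤ m j) →
            ∑ S₀ ∈ N₀.powerset, G₁ (insert i S₀) * ∏ j ∈ S₀, (m j : ℝ) = 0 := by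
          intro m hm
          have hG0 := hBnonneg G₁ hG₁ m hm
          have hH0 := hBnonneg H₁ hH₁ m hm
          have hsum0 : (∑ S₀ ∈ N₀.powerset, G₁ (insert i S₀) * ∏ j ∈ S₀, (m j : ℝ))
              + ∑ S₀ ∈ N₀.powerset, H₁ (insert i S₀) * ∏ j ∈ S₀, (m j : ℝ) = 0 := by
            rw [← Finset.sum_add_distrib]
            apply Finset.sum_eq_zero
            intro S₀ hS₀
            have haz : a (insert i S₀) = 0 := by
              by_contra hc
              exact hiM (hsuppa _ hc (Finset.mem_insert_self i S₀))
            have : G₁ (insert i S₀) + H₁ (insert i S₀) = 0 := by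
              have := congrFun hs (insert i S₀)
              rw [haz] at this
              exact this.symm
            rw [← add_mul, this, zero_mul]
          linarith
        have hz := multilinear_eq_zero N₀ (fun S₀ => G₁ (insert i S₀)) hBzero
          (S.erase i) (Finset.mem_powerset.2 (Finset.erase_subset_erase i hSn))
        apply hGS
        have : insert i (S.erase i) = S := Finset.insert_erase hiS
        rw [← this]
        exact hz
      have hGM := hsupp G H hGK hHK hsum
      have hHM := hsupp H G hHK hGK (by rw [hsum, add_comm])
      set G' : Finset ℕ → ℝ := fun T => if T ⊆ Finset.Icc 1 k then G (T.image γ) else 0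
        with hG'def
      set H' : Finset ℕ → ℝ := fun T => if T ⊆ Finset.Icc 1 k then H (T.image γ) else 0
        with hH'def
      have ha'GH : a' = G' + H' := by
        funext T
        show a' T = G' T + H' T
        by_cases hT : T ⊆ Finset.Icc 1 k
        · rw [ha'val T hT, hG'def, hH'def]
          simp only [if_pos hT]
          exact congrFun hsum (T.image γ)
        · rw [ha'supp T hT, hG'def, hH'def]
          simp only [if_neg hT]
          norm_num
      obtain ⟨⟨c, hc0, hcG⟩, ⟨d, hd0, hdH⟩⟩ :=
        hext G' H' (hmk2 G hGK hGM) (hmk2 H hHK hHM) ha'GH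
      have hconv : ∀ (b : Finset ℕ → ℝ) (e : ℝ), (∀ S, b S ≠ 0 → S ⊆ M) →
          ((fun T => if T ⊆ Finset.Icc 1 k then b (T.image γ) else 0) = e • a') →
          b = e • a := by
        intro b e hbM hbe
        funext S
        show b S = e * a S
        by_cases hSM : S ⊆ M
        · have h1 := congrFun hbe (γPre S)
          simp only [if_pos (hγPre_sub S), hγPre_img S hSM] at h1
          rw [h1, Pi.smul_apply, smul_eq_mul, ha'val _ (hγPre_sub S), hγPre_img S hSM]
        · have h1 : b S = 0 := by
            by_contra hc
            exact hSM (hbM S hc)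
          have h2 : a S = 0 := by
            by_contra hc
            exact hSM (hsuppa S hc)
          rw [h1, h2, mul_zero]
      exact ⟨⟨c, hc0, hconv G c hGM hcG⟩, ⟨d, hd0, hconv H d hHM hdH⟩⟩
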